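/- Consider the scalar singular semiclassical ODE h z α'(z) = α(z) + z φ(z) (equivalently h α' = α/z + φ) near z = 0, with φ analytic on a neighborhood of 0, φ(z) = Σ_j φ_j z^j. Then: (i) there exists a formal power series solution α(z;h) = Σ_j α_j(h) z^j for every h in some interval (0,h₀] if and only if φ is a polynomial, in which case there is a polynomial solution; (ii) if φ is not a polynomial, then along the sequence h = 1/j for those j ≥ 1 with φ_{j−1} ≠ 0 (an infinite set), the equation has no solution analytic at z = 0, the general solution instead containing a term proportional to φ_{j−1} z^j log z. Consequently, there need not exist a diagonalizer analytic in a full neighborhood of a regular-singular point even when the coefficients are analytic there. -/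

import Mathlib

open Set
open Filter Topology
open scoped ENNReal NNReal

/-- Taylor coefficients at `0` of an analytic function `φ : ℂ → ℂ`. -/
noncomputable def taylorCoeff (φ : ℂ → ℂ) (j : ℕ) : ℂ :=
  (1 / (j.factorial : ℂ)) * iteratedDeriv j φ 0

/-- `αc : ℕ → ℂ` is a formal power-series solution `α(z) = Σ_j αc j z^j` of the scalar
singular equation `h z α' = α + z φ`, where `φ` has Taylor coefficients `φc`:
comparing coefficients, `αc 0 = 0` and `(j h − 1) αc j = φc (j−1)` for `j ≥ 1`. -/
def IsFormalSolution (φc : ℕ → ℂ) (h : ℝ) (αc : ℕ → ℂ) : Prop :=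
  αc 0 = 0 ∧ ∀ j : ℕ, 1 ≤ j → ((j : ℂ) * (h : ℂ) - 1) * αc j = φc (j - 1)

private lemma analyticAt_deriv₀ {f : ℂ → ℂ} (hf : AnalyticAt ℂ f 0) :
    AnalyticAt ℂ (deriv f) 0 := by
  obtain ⟨s, hs, hso, h0⟩ := eventually_nhds_iff.mp hf.eventually_analyticAt
  exact (AnalyticOnNhd.deriv (fun x hx => hs x hx)) 0 h0

private lemma taylorCoeff_eq_coeff {f : ℂ → ℂ} {p : FormalMultilinearSeries ℂ ℂ ℂ}
    (h : HasFPowerSeriesAt f p 0) (n : ℕ) : taylorCoeff f n = p.coeff n := by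
  obtain ⟨r, hr⟩ := h
  have h1 := hr.factorial_smul (1 : ℂ) n
  rw [taylorCoeff, iteratedDeriv_eq_iteratedFDeriv, ← h1]
  have h2 : (p n fun _ => (1:ℂ)) = p.coeff n := rfl
  rw [h2, nsmul_eq_mul]
  have hne : (n.factorial : ℂ) ≠ 0 := by exact_mod_cast n.factorial_ne_zero
  field_simp

private lemma iteratedDeriv_const_mul₀ {f : ℂ → ℂ} (hf : AnalyticAt ℂ f 0) (c : ℂ) (n : ℕ) :
    iteratedDeriv n (fun z => c * f z) 0 = c * iteratedDeriv n f 0 := by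
  induction n generalizing f with
  | zero => simp
  | succ n ih =>
    rw [iteratedDeriv_succ', iteratedDeriv_succ']
    have h1 : (deriv fun z => c * f z) =ᶠ[𝓝 (0:ℂ)] fun z => c * deriv f z := by
      filter_upwards [hf.eventually_analyticAt] with z hz
      exact deriv_const_mul c hz.differentiableAt
    rw [h1.iteratedDeriv_eq n]
    exact ih (analyticAt_deriv₀ hf)

private lemma iteratedDeriv_add₀ {f g : ℂ → ℂ} (hf : AnalyticAt ℂ f 0) (hg : AnalyticAt ℂ g 0)
    (n : ℕ) :
    iteratedDeriv n (fun z => f z + g z) 0 = iteratedDeriv n f 0 + iteratedDeriv n g 0 := by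
  induction n generalizing f g with
  | zero => simp
  | succ n ih =>
    rw [iteratedDeriv_succ', iteratedDeriv_succ', iteratedDeriv_succ']
    have h1 : (deriv fun z => f z + g z) =ᶠ[𝓝 (0:ℂ)] fun z => deriv f z + deriv g z := by
      filter_upwards [hf.eventually_analyticAt, hg.eventually_analyticAt] with z h1 h2
      exact deriv_add h1.differentiableAt h2.differentiableAt
    rw [h1.iteratedDeriv_eq n]
    exact ih (analyticAt_deriv₀ hf) (analyticAt_deriv₀ hg)

private lemma iteratedDeriv_zmul₀ {f : ℂ → ℂ} (hf : AnalyticAt ℂ f 0) (k : ℕ) :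
    iteratedDeriv (k+1) (fun z => z * f z) 0 = ((k:ℂ)+1) * iteratedDeriv k f 0 := by
  induction k generalizing f with
  | zero =>
    rw [iteratedDeriv_one]
    have : deriv (fun z => z * f z) 0 = f 0 := by
      rw [deriv_fun_mul differentiableAt_fun_id hf.differentiableAt]; simp
    simp [this, iteratedDeriv_zero]
  | succ k ih =>
    rw [iteratedDeriv_succ']
    have h1 : (deriv fun z => z * f z) =ᶠ[𝓝 (0:ℂ)] fun z => f z + z * deriv f z := by
      filter_upwards [hf.eventually_analyticAt] with z hz
      rw [deriv_fun_mul differentiableAt_fun_id hz.differentiableAt]; simp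
    have hg : AnalyticAt ℂ (fun z => z * deriv f z) 0 :=
      analyticAt_id.mul (analyticAt_deriv₀ hf)
    rw [h1.iteratedDeriv_eq (k+1), iteratedDeriv_add₀ hf hg,
      ih (analyticAt_deriv₀ hf), ← iteratedDeriv_succ']
    push_cast; ring

private lemma taylorCoeff_zero_eq (f : ℂ → ℂ) : taylorCoeff f 0 = f 0 := by
  simp [taylorCoeff]

private lemma taylorCoeff_congr {f g : ℂ → ℂ} (h : f =ᶠ[𝓝 (0:ℂ)] g) (n : ℕ) :
    taylorCoeff f n = taylorCoeff g n := by
  rw [taylorCoeff, taylorCoeff, h.iteratedDeriv_eq n]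

private lemma taylorCoeff_add₀ {f g : ℂ → ℂ} (hf : AnalyticAt ℂ f 0) (hg : AnalyticAt ℂ g 0)
    (n : ℕ) : taylorCoeff (fun z => f z + g z) n = taylorCoeff f n + taylorCoeff g n := by
  rw [taylorCoeff, taylorCoeff, taylorCoeff, iteratedDeriv_add₀ hf hg]; ring

private lemma taylorCoeff_sub₀ {f g : ℂ → ℂ} (hf : AnalyticAt ℂ f 0) (hg : AnalyticAt ℂ g 0)
    (n : ℕ) : taylorCoeff (fun z => f z - g z) n = taylorCoeff f n - taylorCoeff g n := by
  have h1 : (fun z => f z - g z) = fun z => f z + (-1 : ℂ) * g z := by funext z; ring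
  rw [h1, taylorCoeff_add₀ hf (by exact (analyticAt_const (v := (-1:ℂ))).mul hg),
    taylorCoeff, taylorCoeff, iteratedDeriv_const_mul₀ hg, taylorCoeff]
  ring

private lemma taylorCoeff_const_mul₀ {f : ℂ → ℂ} (hf : AnalyticAt ℂ f 0) (c : ℂ) (n : ℕ) :
    taylorCoeff (fun z => c * f z) n = c * taylorCoeff f n := by
  rw [taylorCoeff, taylorCoeff, iteratedDeriv_const_mul₀ hf]; ring

private lemma taylorCoeff_zmul_succ {f : ℂ → ℂ} (hf : AnalyticAt ℂ f 0) (k : ℕ) :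
    taylorCoeff (fun z => z * f z) (k+1) = taylorCoeff f k := by
  rw [taylorCoeff, taylorCoeff, iteratedDeriv_zmul₀ hf k, Nat.factorial_succ]
  have h1 : ((k+1).factorial : ℂ) ≠ 0 := by
    exact_mod_cast (k+1).factorial_ne_zero
  have h2 : (k.factorial : ℂ) ≠ 0 := by exact_mod_cast k.factorial_ne_zero
  have h3 : ((k:ℂ)+1) ≠ 0 := by
    have := (Nat.cast_ne_zero (R := ℂ)).mpr (Nat.succ_ne_zero k)
    push_cast at this; exact this
  push_cast
  field_simp

private lemma taylorCoeff_zmul_zero (f : ℂ → ℂ) : taylorCoeff (fun z => z * f z) 0 = 0 := by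
  simp [taylorCoeff_zero_eq]

private lemma taylorCoeff_deriv (f : ℂ → ℂ) (k : ℕ) :
    taylorCoeff (deriv f) k = ((k:ℂ)+1) * taylorCoeff f (k+1) := by
  rw [taylorCoeff, taylorCoeff, ← iteratedDeriv_succ', Nat.factorial_succ]
  have h2 : (k.factorial : ℂ) ≠ 0 := by exact_mod_cast k.factorial_ne_zero
  have h3 : ((k:ℂ)+1) ≠ 0 := by
    have := (Nat.cast_ne_zero (R := ℂ)).mpr (Nat.succ_ne_zero k)
    push_cast at this; exact this
  push_cast
  field_simp

private lemma iteratedDeriv_const₀ (n : ℕ) (c : ℂ) :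
    iteratedDeriv n (fun _ : ℂ => c) 0 = if n = 0 then c else 0 := by
  induction n generalizing c with
  | zero => simp
  | succ n ih =>
    rw [iteratedDeriv_succ']
    have : (deriv fun _ : ℂ => c) = fun _ : ℂ => (0:ℂ) := by
      funext z; exact deriv_const z c
    rw [this, ih 0]
    simp

private lemma taylorCoeff_monomial (m k : ℕ) :
    taylorCoeff (fun z : ℂ => z ^ m) k = if k = m then 1 else 0 := by
  induction m generalizing k with
  | zero =>
    rcases Nat.eq_zero_or_pos k with hk | hk
    · subst hk; simp [taylorCoeff]
    · have hk0 : k ≠ 0 := by omega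
      simp [pow_zero, taylorCoeff, iteratedDeriv_const₀, hk0]
  | succ m ih =>
    have h1 : (fun z : ℂ => z ^ (m+1)) = fun z : ℂ => z * z ^ m := by
      funext z; rw [pow_succ']
    rw [h1]
    rcases Nat.eq_zero_or_pos k with hk | hk
    · subst hk; rw [taylorCoeff_zmul_zero]; simp
    · obtain ⟨k', rfl⟩ := Nat.exists_eq_add_of_le hk
      have hm : AnalyticAt ℂ (fun z : ℂ => z ^ m) 0 := by
        exact analyticAt_id.pow m
      rw [show 1 + k' = k' + 1 by omega, taylorCoeff_zmul_succ hm, ih k']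
      simp [Nat.add_right_cancel_iff]

private lemma eventually_zero_of_taylorCoeff_zero {f : ℂ → ℂ} (hf : AnalyticAt ℂ f 0)
    (h : ∀ n, taylorCoeff f n = 0) : f =ᶠ[𝓝 (0:ℂ)] 0 := by
  obtain ⟨p, hp⟩ := hf
  have hp0 : p = 0 := by
    ext n : 1
    have hn : p n = 0 := FormalMultilinearSeries.coeff_eq_zero.mp
      (by rw [← taylorCoeff_eq_coeff hp, h n])
    rw [hn]; rfl
  rw [hp0] at hp
  exact hp.eventually_eq_zero

private lemma formal_of_ode {h : ℝ} {α ψ : ℂ → ℂ} (hα : AnalyticAt ℂ α 0)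
    (hψ : AnalyticAt ℂ ψ 0)
    (hode : ∀ᶠ z in 𝓝 (0:ℂ), (h:ℂ) * z * deriv α z = α z + z * ψ z) :
    IsFormalSolution (taylorCoeff ψ) h (taylorCoeff α) := by
  have hαd : AnalyticAt ℂ (deriv α) 0 := analyticAt_deriv₀ hα
  have hEq : (fun z => (h:ℂ) * (z * deriv α z)) =ᶠ[𝓝 (0:ℂ)]
      fun z => α z + z * ψ z := by
    filter_upwards [hode] with z hz
    rw [← hz]; ring
  constructor
  · have h0 := hode.self_of_nhds
    simp only [mul_zero, zero_mul, zero_add, add_zero] at h0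
    rw [taylorCoeff_zero_eq, ← h0]
  · intro j hj
    obtain ⟨k, rfl⟩ := Nat.exists_eq_add_of_le hj
    rw [show 1 + k = k + 1 by omega]
    have hid : AnalyticAt ℂ (fun z => z * deriv α z) 0 := analyticAt_id.mul hαd
    have hzψ : AnalyticAt ℂ (fun z => z * ψ z) 0 := analyticAt_id.mul hψ
    have key := taylorCoeff_congr hEq (k + 1)
    rw [taylorCoeff_const_mul₀ hid, taylorCoeff_zmul_succ hαd, taylorCoeff_deriv,
      taylorCoeff_add₀ hα hzψ, taylorCoeff_zmul_succ hψ] at key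
    have : (k + 1 : ℕ) - 1 = k := by omega
    rw [this]
    push_cast
    linear_combination key

private lemma resonant_factor (j : ℕ) (hj : 1 ≤ j) :
    (j : ℂ) * (((1 / (j : ℝ) : ℝ)) : ℂ) - 1 = 0 := by
  have hj0 : (j : ℂ) ≠ 0 := Nat.cast_ne_zero.mpr (by omega)
  push_cast
  field_simp
  simp

private lemma no_formal {φc : ℕ → ℂ} {j : ℕ} (hj : 1 ≤ j) (hne : φc (j - 1) ≠ 0) :
    ¬∃ αc : ℕ → ℂ, IsFormalSolution φc (1 / (j : ℝ)) αc := by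
  rintro ⟨αc, -, hrec⟩
  have h1 := hrec j hj
  rw [resonant_factor j hj, zero_mul] at h1
  exact hne h1.symm

private lemma exists_beta {ψ : ℂ → ℂ} {j : ℕ} (hj : 1 ≤ j) (hψ : AnalyticAt ℂ ψ 0)
    (hres : taylorCoeff ψ (j - 1) = 0) :
    ∃ β : ℂ → ℂ, AnalyticAt ℂ β 0 ∧
      ∀ᶠ z in 𝓝 (0:ℂ), (((1 / (j:ℝ) : ℝ)) : ℂ) * z * deriv β z = β z + z * ψ z := by
  set hC : ℂ := (((1 / (j:ℝ) : ℝ)) : ℂ) with hCdef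
  have hj0 : (j:ℂ) ≠ 0 := Nat.cast_ne_zero.mpr (by omega)
  have hjR : (0:ℝ) < (j:ℝ) := Nat.cast_pos.mpr (by omega)
  have hCj : hC * (j:ℂ) = 1 := by
    rw [hCdef]; push_cast; field_simp
  have hC0 : hC ≠ 0 := by
    intro hc; rw [hc, zero_mul] at hCj; exact one_ne_zero hCj.symm
  set b : ℕ → ℂ := fun k =>
    if k = 0 ∨ k = j then 0 else taylorCoeff ψ (k-1) / ((k:ℂ) * hC - 1) with hbdef
  have hdnz : ∀ k : ℕ, k ≠ j → (k:ℂ) * hC - 1 ≠ 0 := by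
    intro k hk hd
    have h1 : ((k:ℂ) - (j:ℂ)) * hC = 0 := by linear_combination hd - hCj
    have h2 : (k:ℂ) = (j:ℂ) := by
      have h3 := (mul_eq_zero.mp h1).resolve_right hC0
      linear_combination h3
    exact hk (by exact_mod_cast h2)
  have hbound : ∀ k : ℕ, k ≠ j → 1/(j:ℝ) ≤ ‖(k:ℂ) * hC - 1‖ := by
    intro k hk
    have he : (k:ℂ) * hC - 1 = ((((k:ℝ) * (1/(j:ℝ)) - 1) : ℝ) : ℂ) := by
      rw [hCdef]; push_cast; ring
    rw [he, Complex.norm_real, Real.norm_eq_abs]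
    have h1 : (k:ℝ) * (1/(j:ℝ)) - 1 = ((k:ℝ) - (j:ℝ)) / (j:ℝ) := by field_simp
    rw [h1, abs_div, abs_of_pos hjR]
    have h2 : (1:ℝ) ≤ |(k:ℝ) - (j:ℝ)| := by
      have h3 : 1 ≤ |(k:ℤ) - (j:ℤ)| := Int.one_le_abs (sub_ne_zero.mpr (by exact_mod_cast hk))
      calc (1:ℝ) ≤ ((|(k:ℤ) - (j:ℤ)| : ℤ) : ℝ) := by exact_mod_cast h3
        _ = |(k:ℝ) - (j:ℝ)| := by push_cast; ring_nf
    gcongr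
  obtain ⟨p, hp⟩ := id hψ
  have hcoeff : ∀ n, taylorCoeff ψ n = p.coeff n := taylorCoeff_eq_coeff hp
  obtain ⟨r, hr0, hrlt⟩ := ENNReal.lt_iff_exists_nnreal_btwn.mp hp.radius_pos
  obtain ⟨C, hCpos, hCb⟩ := p.norm_mul_pow_le_of_lt_radius hrlt
  have hr0' : (0:ℝ) < (r:ℝ) := by exact_mod_cast hr0
  set B := FormalMultilinearSeries.ofScalars ℂ b with hB
  have hBb : ∀ n, ‖B n‖ * (r:ℝ)^n ≤ (j:ℝ) * C * r := by
    intro n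
    rw [hB, FormalMultilinearSeries.ofScalars_norm]
    match n with
    | 0 =>
      have : b 0 = 0 := by simp [hbdef]
      rw [this]; simp; positivity
    | (k+1) =>
      by_cases hkj : k + 1 = j
      · have : b (k+1) = 0 := by simp [hbdef, hkj]
        rw [this]; simp; positivity
      · have hd := hdnz (k+1) hkj
        have h5 := hbound (k+1) hkj
        have hnb : ‖b (k+1)‖ ≤ (j:ℝ) * ‖p.coeff k‖ := by
          have hbk : b (k+1) = taylorCoeff ψ k / (((k+1:ℕ):ℂ) * hC - 1) := by
            simp [hbdef, hkj]
          rw [hbk, norm_div, hcoeff k]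
          rw [div_le_iff₀ (lt_of_lt_of_le (by positivity) h5)]
          have h7 := mul_le_mul_of_nonneg_left h5
            (by positivity : (0:ℝ) ≤ (j:ℝ) * ‖p.coeff k‖)
          have h8 : (j:ℝ) * ‖p.coeff k‖ * (1/(j:ℝ)) = ‖p.coeff k‖ := by field_simp
          linarith
        calc ‖b (k+1)‖ * (r:ℝ)^(k+1) ≤ ((j:ℝ) * ‖p.coeff k‖) * (r:ℝ)^(k+1) := by
              apply mul_le_mul_of_nonneg_right hnb (by positivity)
          _ = (j:ℝ) * r * (‖p k‖ * (r:ℝ)^k) := by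
              rw [FormalMultilinearSeries.norm_apply_eq_norm_coef]; ring
          _ ≤ (j:ℝ) * r * C := by
              apply mul_le_mul_of_nonneg_left (hCb k) (by positivity)
          _ = (j:ℝ) * C * r := by ring
  have hrad : (r : ℝ≥0∞) ≤ B.radius := B.le_radius_of_bound ((j:ℝ) * C * (r:ℝ)) hBb
  have hradpos : 0 < B.radius := lt_of_lt_of_le hr0 hrad
  set β := B.sum with hβdef
  have hball := B.hasFPowerSeriesOnBall hradpos
  have hat : HasFPowerSeriesAt β B 0 := hball.hasFPowerSeriesAt
  have hβa : AnalyticAt ℂ β 0 := ⟨B, hat⟩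
  have hβc : ∀ n, taylorCoeff β n = b n := by
    intro n
    rw [taylorCoeff_eq_coeff hat]
    show B n (fun _ => 1) = b n
    rw [hB, FormalMultilinearSeries.ofScalars_apply_eq]
    simp
  have hβd : AnalyticAt ℂ (deriv β) 0 := analyticAt_deriv₀ hβa
  set g : ℂ → ℂ := fun z => hC * (z * deriv β z) - (β z + z * ψ z) with hgdef
  have hz1 : AnalyticAt ℂ (fun z => hC * (z * deriv β z)) 0 := by
    exact analyticAt_const.mul (analyticAt_id.mul hβd)
  have hzd : AnalyticAt ℂ (fun z => z * deriv β z) 0 := by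
    exact analyticAt_id.mul hβd
  have hzψ : AnalyticAt ℂ (fun z => z * ψ z) 0 := by
    exact analyticAt_id.mul hψ
  have hz2 : AnalyticAt ℂ (fun z => β z + z * ψ z) 0 := by
    exact hβa.add hzψ
  have hga : AnalyticAt ℂ g 0 := by
    exact hz1.sub hz2
  have hβ00 : β 0 = 0 := by
    have h := taylorCoeff_zero_eq β
    rw [hβc 0] at h
    simp only [hbdef, if_pos (Or.inl rfl)] at h
    exact h.symm
  have hgc : ∀ n, taylorCoeff g n = 0 := by
    intro n
    rw [hgdef, taylorCoeff_sub₀ hz1 hz2, taylorCoeff_const_mul₀ hzd,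
      taylorCoeff_add₀ hβa hzψ]
    match n with
    | 0 =>
      rw [taylorCoeff_zmul_zero, taylorCoeff_zmul_zero, taylorCoeff_zero_eq, hβ00]
      ring
    | (k+1) =>
      rw [taylorCoeff_zmul_succ hβd, taylorCoeff_deriv, hβc (k+1), taylorCoeff_zmul_succ hψ]
      by_cases hkj : k + 1 = j
      · have hb0 : b (k+1) = 0 := by simp [hbdef, hkj]
        have hk' : k = j - 1 := by omega
        rw [hb0, hk', hres]; ring
      · have hd : ((k:ℂ)+1) * hC - 1 ≠ 0 := by
          have := hdnz (k+1) hkj; push_cast at this; exact this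
        have hbk : b (k+1) = taylorCoeff ψ k / (((k+1:ℕ):ℂ) * hC - 1) := by
          simp [hbdef, hkj]
        rw [hbk]
        push_cast
        linear_combination (taylorCoeff ψ k) * mul_inv_cancel₀ hd
  have hg0 : g =ᶠ[𝓝 (0:ℂ)] 0 := eventually_zero_of_taylorCoeff_zero hga hgc
  refine ⟨β, hβa, ?_⟩
  filter_upwards [hg0] with z hz
  have hz' : hC * (z * deriv β z) - (β z + z * ψ z) = 0 := by simpa [hgdef] using hz
  linear_combination hz'

private lemma poly_case {φc : ℕ → ℂ} {m : ℕ} (hm : ∀ j : ℕ, m ≤ j → φc j = 0)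
    {h : ℝ} (hh : h ∈ Ioc (0:ℝ) (1/((m:ℝ)+1))) :
    ∃ αc : ℕ → ℂ, IsFormalSolution φc h αc ∧ ∀ j : ℕ, m + 1 ≤ j → αc j = 0 := by
  obtain ⟨hpos, hle⟩ := hh
  set αc : ℕ → ℂ := fun j =>
    if j = 0 then 0 else if ((j:ℂ) * (h:ℂ) - 1) = 0 then 0
      else φc (j-1) / ((j:ℂ)*(h:ℂ)-1) with hαc
  have key : ∀ j : ℕ, 1 ≤ j → ((j:ℂ)*(h:ℂ)-1) = 0 → m ≤ j - 1 := by
    intro j hj hd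
    have h2 : ((((j:ℝ)*h - 1 : ℝ)) : ℂ) = 0 := by push_cast; push_cast at hd; linear_combination hd
    have hr : (j:ℝ)*h = 1 := by
      have h3 := Complex.ofReal_eq_zero.mp h2; linarith
    have hle' : h * ((m:ℝ)+1) ≤ 1 := (le_div_iff₀ (by positivity)).mp hle
    have hjge : ((m:ℝ)+1) ≤ (j:ℝ) := by nlinarith
    have : m + 1 ≤ j := by exact_mod_cast hjge
    omega
  refine ⟨αc, ⟨by simp [hαc], ?_⟩, ?_⟩
  · intro j hj
    have hj0 : j ≠ 0 := by omega
    by_cases hd : ((j:ℂ)*(h:ℂ)-1) = 0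
    · rw [hd, zero_mul, hm _ (key j hj hd)]
    · have : αc j = φc (j-1) / ((j:ℂ)*(h:ℂ)-1) := by simp [hαc, hj0, hd]
      rw [this, mul_div_cancel₀ _ hd]
  · intro j hj
    have : φc (j-1) = 0 := hm _ (by omega)
    simp [hαc, this]

/-- **Regular-singular point counterexample** (Example 4.1).  Consider the scalar singular
semiclassical ODE `h z α'(z) = α(z) + z φ(z)` near `z = 0`, with `φ` analytic near `0` with
Taylor coefficients `φ_j`.  Then: (i) a formal power-series solution exists for every `h` in
some interval `(0,h₀]` if and only if `φ` is a polynomial, in which case there is a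
polynomial solution; (ii) if `φ` is not a polynomial, the set of `j ≥ 1` with
`φ_{j−1} ≠ 0` is infinite, and for each such `j`, at the resonant value `h = 1/j` there is
neither a formal power-series solution nor a solution analytic at `z = 0`; instead there is
a solution on a slit neighborhood of `0` of the form `β(z) + c φ_{j−1} z^j log z` with `β`
analytic and `c ≠ 0`. -/
theorem regular_singular_counterexample
    (φ : ℂ → ℂ) (ρ₀ : ℝ) (hρ₀ : 0 < ρ₀)
    (hφ : DifferentiableOn ℂ φ (Metric.ball 0 ρ₀)) :
    -- (i) formal solvability for all small h iff φ is a polynomial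
    ((∃ h₀ : ℝ, 0 < h₀ ∧ ∀ h ∈ Ioc (0:ℝ) h₀, ∃ αc : ℕ → ℂ,
        IsFormalSolution (taylorCoeff φ) h αc)
      ↔ (∃ m : ℕ, ∀ j : ℕ, m ≤ j → taylorCoeff φ j = 0)) ∧
    -- ... in which case there is a polynomial solution
    ((∃ m : ℕ, ∀ j : ℕ, m ≤ j → taylorCoeff φ j = 0) →
      ∃ h₀ : ℝ, 0 < h₀ ∧ ∀ h ∈ Ioc (0:ℝ) h₀, ∃ αc : ℕ → ℂ,
        IsFormalSolution (taylorCoeff φ) h αc ∧ ∃ m' : ℕ, ∀ j : ℕ, m' ≤ j → αc j = 0) ∧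
    -- (ii) the resonant values h = 1/j obstruct analytic solvability
    ((¬ ∃ m : ℕ, ∀ j : ℕ, m ≤ j → taylorCoeff φ j = 0) →
      {j : ℕ | 1 ≤ j ∧ taylorCoeff φ (j - 1) ≠ 0}.Infinite ∧
      ∀ j : ℕ, 1 ≤ j → taylorCoeff φ (j - 1) ≠ 0 →
        (¬ ∃ αc : ℕ → ℂ, IsFormalSolution (taylorCoeff φ) (1 / (j : ℝ)) αc) ∧
        (¬ ∃ (α : ℂ → ℂ) (ρ : ℝ), 0 < ρ ∧ ρ ≤ ρ₀ ∧
          DifferentiableOn ℂ α (Metric.ball 0 ρ) ∧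
          ∀ z ∈ Metric.ball (0:ℂ) ρ,
            ((1 / (j : ℝ) : ℝ) : ℂ) * z * deriv α z = α z + z * φ z) ∧
        -- the general solution instead contains a term proportional to φ_{j−1} z^j log z
        (∃ cst : ℂ, cst ≠ 0 ∧ ∃ (β : ℂ → ℂ) (ρ : ℝ), 0 < ρ ∧ ρ ≤ ρ₀ ∧
          DifferentiableOn ℂ β (Metric.ball 0 ρ) ∧
          ∀ z ∈ Metric.ball (0:ℂ) ρ, (z.im ≠ 0 ∨ 0 < z.re) →
            ((1 / (j : ℝ) : ℝ) : ℂ) * z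
                * deriv (fun w => β w + cst * taylorCoeff φ (j - 1) * w ^ j
                    * Complex.log w) z
              = (β z + cst * taylorCoeff φ (j - 1) * z ^ j * Complex.log z) + z * φ z)) := by
  have hφa : AnalyticAt ℂ φ 0 :=
    (hφ.analyticOnNhd Metric.isOpen_ball) 0 (Metric.mem_ball_self hρ₀)
  refine ⟨⟨?_, ?_⟩, ?_, ?_⟩
  · -- mp of (i)
    rintro ⟨h₀, hh₀, H⟩
    by_contra hnp
    push_neg at hnp
    set N := max 1 ⌈1/h₀⌉₊ with hN
    obtain ⟨k, hkN, hkne⟩ := hnp N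
    set j := k + 1 with hjdef
    have hj1 : (1:ℕ) ≤ j := by omega
    have hjR : (0:ℝ) < (j:ℝ) := Nat.cast_pos.mpr (by omega)
    have hNj : (1/h₀ : ℝ) ≤ (j:ℝ) := by
      calc (1/h₀:ℝ) ≤ (⌈1/h₀⌉₊ : ℝ) := Nat.le_ceil _
        _ ≤ (N:ℝ) := by exact_mod_cast le_max_right 1 ⌈1/h₀⌉₊
        _ ≤ (j:ℝ) := by exact_mod_cast (by omega : N ≤ j)
    have hmem : (1/(j:ℝ)) ∈ Ioc (0:ℝ) h₀ := by
      constructor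
      · positivity
      · rw [div_le_iff₀ hjR]
        rw [div_le_iff₀ hh₀] at hNj
        linarith
    obtain ⟨αc, hsol⟩ := H _ hmem
    exact no_formal hj1 (by simpa [hjdef] using hkne) ⟨αc, hsol⟩
  · -- mpr of (i)
    rintro ⟨m, hm⟩
    refine ⟨1/((m:ℝ)+1), by positivity, fun h hh => ?_⟩
    obtain ⟨αc, h1, -⟩ := poly_case hm hh
    exact ⟨αc, h1⟩
  · -- (i')
    rintro ⟨m, hm⟩
    refine ⟨1/((m:ℝ)+1), by positivity, fun h hh => ?_⟩
    obtain ⟨αc, h1, h2⟩ := poly_case hm hh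
    exact ⟨αc, h1, m+1, h2⟩
  · -- (ii)
    intro hnp
    push_neg at hnp
    have hSinf : {k : ℕ | taylorCoeff φ k ≠ 0}.Infinite := by
      by_contra hfin
      rw [Set.not_infinite] at hfin
      obtain ⟨M, hM⟩ := hfin.bddAbove
      obtain ⟨k, hk1, hk2⟩ := hnp (M+1)
      have := hM hk2
      omega
    constructor
    · have himg := hSinf.image
        (Set.injOn_of_injective (fun a b hab => by simpa using hab : Function.Injective fun k => k+1))
      apply himg.mono
      rintro _ ⟨k, hk, rfl⟩
      exact ⟨by simp, by simpa using hk⟩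
    intro j hj hne
    refine ⟨no_formal hj hne, ?_, ?_⟩
    · rintro ⟨α, ρ, hρpos, hρle, hαd, hode⟩
      have hαa : AnalyticAt ℂ α 0 :=
        (hαd.analyticOnNhd Metric.isOpen_ball) 0 (Metric.mem_ball_self hρpos)
      have hφa' : AnalyticAt ℂ φ 0 := hφa
      have hev : ∀ᶠ z in 𝓝 (0:ℂ),
          (((1/(j:ℝ) : ℝ)) : ℂ) * z * deriv α z = α z + z * φ z := by
        filter_upwards [Metric.ball_mem_nhds (0:ℂ) hρpos] with z hz using hode z hz
      exact no_formal hj hne ⟨taylorCoeff α, formal_of_ode hαa hφa' hev⟩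
    · set c : ℂ := taylorCoeff φ (j-1) with hcdef
      set ψ : ℂ → ℂ := fun z => φ z - c * z^(j-1) with hψdef
      have hmono : AnalyticAt ℂ (fun z : ℂ => c * z^(j-1)) 0 := by
        exact analyticAt_const.mul (analyticAt_id.pow _)
      have hmono' : AnalyticAt ℂ (fun z : ℂ => z^(j-1)) 0 := by
        exact analyticAt_id.pow _
      have hψa : AnalyticAt ℂ ψ 0 := by exact hφa.sub hmono
      have hres : taylorCoeff ψ (j-1) = 0 := by
        rw [hψdef, taylorCoeff_sub₀ hφa hmono, taylorCoeff_const_mul₀ hmono',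
          taylorCoeff_monomial, if_pos rfl, ← hcdef]
        ring
      obtain ⟨β, hβa, hβode⟩ := exists_beta hj hψa hres
      have hβdiff : ∀ᶠ z in 𝓝 (0:ℂ), DifferentiableAt ℂ β z := by
        filter_upwards [hβa.eventually_analyticAt] with z hz using hz.differentiableAt
      obtain ⟨ρ₁, hρ₁pos, hball⟩ := Metric.eventually_nhds_iff_ball.mp (hβode.and hβdiff)
      refine ⟨(j:ℂ), Nat.cast_ne_zero.mpr (by omega), β, min ρ₁ ρ₀,
        lt_min hρ₁pos hρ₀, min_le_right _ _, ?_, ?_⟩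
      · intro z hz
        exact ((hball z (Metric.ball_subset_ball (min_le_left _ _) hz)).2).differentiableWithinAt
      · intro z hz hslit
        obtain ⟨hodez, hdiffz⟩ := hball z (Metric.ball_subset_ball (min_le_left _ _) hz)
        have hzslit : z ∈ Complex.slitPlane := by
          rw [Complex.mem_slitPlane_iff]; tauto
        have hz0 : z ≠ 0 := Complex.slitPlane_ne_zero hzslit
        set CC : ℂ := (j:ℂ) * c with hCC
        have hpow : HasDerivAt (fun w : ℂ => w ^ j) ((j:ℂ) * z^(j-1)) z := hasDerivAt_pow j z
        have hlog : HasDerivAt Complex.log z⁻¹ z := Complex.hasDerivAt_log hzslit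
        have hml : HasDerivAt (fun w : ℂ => w^j * Complex.log w)
            ((j:ℂ) * z^(j-1) * Complex.log z + z^j * z⁻¹) z := hpow.mul hlog
        have hcm := hml.const_mul CC
        have htot := hdiffz.hasDerivAt.add hcm
        have hFeq : (fun w => β w + (j:ℂ) * taylorCoeff φ (j - 1) * w ^ j * Complex.log w)
            = fun w => β w + CC * (w^j * Complex.log w) := by
          funext w; rw [hCC, hcdef]; ring
        have hderiv : deriv (fun w => β w + (j:ℂ) * taylorCoeff φ (j - 1) * w ^ j
              * Complex.log w) z
            = deriv β z + CC * ((j:ℂ) * z^(j-1) * Complex.log z + z^j * z⁻¹) := by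
          rw [hFeq]; exact htot.deriv
        rw [hderiv]
        have hkey : (((1/(j:ℝ) : ℝ)) : ℂ) * z * deriv β z = β z + z * (φ z - c * z^(j-1)) := by
          simpa only [hψdef] using hodez
        have hCj : (((1/(j:ℝ) : ℝ)) : ℂ) * (j:ℂ) = 1 := by
          have hj0 : (j:ℂ) ≠ 0 := Nat.cast_ne_zero.mpr (by omega)
          push_cast
          exact one_div_mul_cancel hj0
        have hzp : z^(j-1) * z = z^j := by rw [← pow_succ, Nat.sub_add_cancel hj]
        have hzi : z^j * z⁻¹ = z^(j-1) := by rw [← hzp]; field_simp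
        rw [hzi, hCC]
        linear_combination hkey
          + ((j:ℂ)*c*Complex.log z*z*z^(j-1) + c*z*z^(j-1)) * hCj
          + ((j:ℂ)*c*Complex.log z) * hzp
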